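/- Let $\{D_{n,i},\mathcal{F}_i : 1\le i\le n\}$, $n\ge 1$, be a martingale-difference array with a common filtration $(\mathcal{F}_i)$, $\mathcal{F}_0$ trivial. Define $M_{n,k}=\sum_{i=1}^k D_{n,i}$, $S_{n,k}=M_{n,k}$ for $k\le n$ and $S_{n,k}=M_{n,n}+\sum_{j=n+1}^k D_{j,j}$ for $k>n$, and $R_n=\sum_{j=1}^{n-1}(D_{n,j}-D_{n-1,j})$. Then for any non-increasing positive sequence $(c_n)$, $p\ge 1$, $\lambda>0$ and $n\le N$: $2^{-p}\lambda^p\,\mathbb{P}\big(\max_{n\le m\le N} c_m|M_{m,m}|>\lambda\big) \le c_N^p\,\mathbb{E}(|S_{n,N}|^p) + \sum_{j=n}^{N-1}(c_j^p-c_{j+1}^p)\,\mathbb{E}(|S_{n,j}|^p) + \mathbb{E}\big[\big(\sum_{j=n+1}^N c_j|R_j|\big)^p\big]$. -/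

import Mathlib

open MeasureTheory Finset

lemma measurable_realSign : Measurable Real.sign := by
  unfold Real.sign
  exact Measurable.ite (measurableSet_lt measurable_id measurable_const) measurable_const
    (Measurable.ite (measurableSet_lt measurable_const measurable_id) measurable_const
      measurable_const)

lemma abs_realSign_le (x : ℝ) : |Real.sign x| ≤ 1 := by
  rcases Real.sign_apply_eq x with h | h | h <;> rw [h] <;> norm_num

lemma realSign_mul_self (x : ℝ) : Real.sign x * x = |x| := by
  rcases lt_trichotomy x 0 with h | h | h
  · rw [Real.sign_of_neg h, abs_of_neg h]; ring
  · simp [h]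
  · rw [Real.sign_of_pos h, abs_of_pos h]; ring

/-- Tangent line inequality for `t ↦ t ^ p` on `[0, ∞)`. -/
lemma tangent_rpow_nonneg {p : ℝ} (hp : 1 ≤ p) {a b : ℝ} (ha : 0 ≤ a) (hb : 0 ≤ b) :
    a ^ p + p * a ^ (p - 1) * (b - a) ≤ b ^ p := by
  rcases eq_or_lt_of_le ha with h0 | h0
  · rcases eq_or_lt_of_le hp with h1 | h1
    · subst h1
      simp [← h0, Real.rpow_one]
    · rw [← h0, Real.zero_rpow (by positivity), Real.zero_rpow (by linarith)]
      simpa using Real.rpow_nonneg hb p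
  · have hb' : -1 ≤ b / a - 1 := by
      have : 0 ≤ b / a := div_nonneg hb h0.le
      linarith
    have hB := one_add_mul_self_le_rpow_one_add hb' hp
    rw [show 1 + (b / a - 1) = b / a by ring, Real.div_rpow hb h0.le] at hB
    have hap : 0 < a ^ p := Real.rpow_pos_of_pos h0 p
    have h2 : (1 + p * (b / a - 1)) * a ^ p ≤ b ^ p := by
      calc (1 + p * (b / a - 1)) * a ^ p ≤ b ^ p / a ^ p * a ^ p :=
            mul_le_mul_of_nonneg_right hB hap.le
        _ = b ^ p := div_mul_cancel₀ _ hap.ne'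
    have hkey : (1 + p * (b / a - 1)) * a ^ p = a ^ p + p * a ^ (p - 1) * (b - a) := by
      have hsplit : a ^ p = a ^ (p - 1) * a := by
        rw [← Real.rpow_add_one h0.ne' (p - 1)]; ring_nf
      rw [hsplit]; field_simp
    linarith [h2, hkey.symm.le]

/-- Tangent line inequality for `x ↦ |x| ^ p` on `ℝ`. -/
lemma tangent_rpow {p : ℝ} (hp : 1 ≤ p) (x y : ℝ) :
    |x| ^ p + p * |x| ^ (p - 1) * Real.sign x * (y - x) ≤ |y| ^ p := by
  have h1 : Real.sign x * (y - x) ≤ |y| - |x| := by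
    have h2 : Real.sign x * y ≤ |y| := by
      calc Real.sign x * y ≤ |Real.sign x * y| := le_abs_self _
        _ = |Real.sign x| * |y| := abs_mul _ _
        _ ≤ 1 * |y| := mul_le_mul_of_nonneg_right (abs_realSign_le x) (abs_nonneg _)
        _ = |y| := one_mul _
    have h3 := realSign_mul_self x
    nlinarith [h3]
  have hcoef : 0 ≤ p * |x| ^ (p - 1) := by positivity
  have h4 : p * |x| ^ (p - 1) * (Real.sign x * (y - x)) ≤ p * |x| ^ (p - 1) * (|y| - |x|) :=
    mul_le_mul_of_nonneg_left h1 hcoef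
  have h5 := tangent_rpow_nonneg hp (abs_nonneg x) (abs_nonneg y)
  nlinarith [h4, h5]

/-- `a^(p-1) * b ≤ a^p + b^p` for nonnegative reals and `p ≥ 1`. -/
lemma rpow_sub_one_mul_le {p : ℝ} (hp : 1 ≤ p) {a b : ℝ} (ha : 0 ≤ a) (hb : 0 ≤ b) :
    a ^ (p - 1) * b ≤ a ^ p + b ^ p := by
  rcases le_total a b with h | h
  · rcases eq_or_lt_of_le hb with h0 | h0
    · rw [← h0]; simp [Real.rpow_nonneg, add_nonneg, Real.rpow_nonneg ha, Real.rpow_nonneg hb]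
    · have : a ^ (p - 1) * b ≤ b ^ (p - 1) * b :=
        mul_le_mul_of_nonneg_right (Real.rpow_le_rpow ha h (by linarith)) h0.le
      calc a ^ (p - 1) * b ≤ b ^ (p - 1) * b := this
        _ = b ^ p := by rw [← Real.rpow_add_one h0.ne' (p - 1)]; ring_nf
        _ ≤ a ^ p + b ^ p := le_add_of_nonneg_left (Real.rpow_nonneg ha p)
  · rcases eq_or_lt_of_le ha with h0 | h0
    · have hb0 : b = 0 := le_antisymm (h.trans h0.symm.le) hb
      rw [hb0, mul_zero]
      have := Real.rpow_nonneg ha p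
      have := Real.rpow_nonneg (le_refl (0:ℝ)) p
      linarith
    · have : a ^ (p - 1) * b ≤ a ^ (p - 1) * a :=
        mul_le_mul_of_nonneg_left h (Real.rpow_nonneg ha _)
      calc a ^ (p - 1) * b ≤ a ^ (p - 1) * a := this
        _ = a ^ p := by rw [← Real.rpow_add_one h0.ne' (p - 1)]; ring_nf
        _ ≤ a ^ p + b ^ p := le_add_of_nonneg_right (Real.rpow_nonneg hb p)

/-- Telescoping sum. -/
lemma sum_Ico_tele (f : ℕ → ℝ) {a b : ℕ} (h : a ≤ b) :
    ∑ j ∈ Finset.Ico a b, (f j - f (j + 1)) = f a - f b := by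
  induction b, h using Nat.le_induction with
  | base => simp
  | succ b hab ih =>
    rw [Finset.sum_Ico_succ_top (by omega), ih]; ring

/-- Row-wise partial sums of a triangular array (1-indexed). -/
def arrM {Ω : Type*} (D : ℕ → ℕ → Ω → ℝ) (n k : ℕ) (ω : Ω) : ℝ :=
  ∑ i ∈ Finset.Icc 1 k, D n i ω

/-- The process `S_{n,k}` : equals `M_{n,k}` for `k ≤ n` and
`M_{n,n} + ∑_{j=n+1}^k D_{j,j}` for `k > n`. -/
def arrS {Ω : Type*} (D : ℕ → ℕ → Ω → ℝ) (n k : ℕ) (ω : Ω) : ℝ :=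
  if k ≤ n then arrM D n k ω
  else arrM D n n ω + ∑ j ∈ Finset.Icc (n + 1) k, D j j ω

/-- The row increment `R_n = ∑_{j=1}^{n-1} (D_{n,j} - D_{n-1,j})`. -/
def arrR {Ω : Type*} (D : ℕ → ℕ → Ω → ℝ) (n : ℕ) (ω : Ω) : ℝ :=
  ∑ j ∈ Finset.Icc 1 (n - 1), (D n j ω - D (n - 1) j ω)

section arrLemmas
variable {Ω : Type*} {D : ℕ → ℕ → Ω → ℝ}

lemma arrS_eq {n m : ℕ} (h : n ≤ m) (ω : Ω) :
    arrS D n m ω = arrM D n n ω + ∑ j ∈ Finset.Ioc n m, D j j ω := by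
  unfold arrS
  rcases eq_or_lt_of_le h with h1 | h1
  · subst h1; simp
  · rw [if_neg (by omega), ← Finset.Icc_add_one_left_eq_Ioc]

lemma arrM_succ_self {j : ℕ} (hj : 1 ≤ j) (ω : Ω) :
    arrM D j j ω = arrM D j (j - 1) ω + D j j ω := by
  unfold arrM
  obtain ⟨i, rfl⟩ : ∃ i, j = i + 1 := ⟨j - 1, by omega⟩
  rw [show i + 1 - 1 = i from rfl, ← Finset.Ico_add_one_right_eq_Icc, ← Finset.Ico_add_one_right_eq_Icc,
    Finset.sum_Ico_succ_top (by omega)]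

lemma arrR_eq {j : ℕ} (ω : Ω) :
    arrR D j ω = arrM D j (j - 1) ω - arrM D (j - 1) (j - 1) ω := by
  unfold arrR arrM
  rw [Finset.sum_sub_distrib]

/-- Key identity: `M_{m,m} = S_{n,m} + ∑_{j=n+1}^m R_j`. -/
lemma arrM_eq_arrS_add {n m : ℕ} (hn : 1 ≤ n) (h : n ≤ m) (ω : Ω) :
    arrM D m m ω = arrS D n m ω + ∑ j ∈ Finset.Ioc n m, arrR D j ω := by
  induction m, h using Nat.le_induction with
  | base => rw [arrS_eq (le_refl n)]; simp
  | succ m hnm ih =>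
    have h1 : arrM D (m + 1) (m + 1) ω = arrM D m m ω + D (m + 1) (m + 1) ω
        + arrR D (m + 1) ω := by
      rw [arrM_succ_self (by omega), arrR_eq]
      simp only [Nat.add_sub_cancel]
      ring
    rw [h1, ih, arrS_eq (by omega), arrS_eq (le_trans hnm (Nat.le_succ m)),
      Finset.sum_Ioc_succ_top hnm, Finset.sum_Ioc_succ_top hnm]
    ring

end arrLemmas

section measLemmas
variable {Ω : Type*} {m0 : MeasurableSpace Ω} {μ : Measure Ω} [IsProbabilityMeasure μ]
  {ℱ : Filtration ℕ m0} {D : ℕ → ℕ → Ω → ℝ}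

lemma arrS_stronglyMeasurable
    (hadp : ∀ n i, 1 ≤ i → i ≤ n → StronglyMeasurable[ℱ i] (D n i))
    {n k : ℕ} (hn : 1 ≤ n) (h : n ≤ k) :
    StronglyMeasurable[ℱ k] (arrS D n k) := by
  have : arrS D n k = fun ω => arrM D n n ω + ∑ j ∈ Finset.Ioc n k, D j j ω :=
    funext (arrS_eq h)
  rw [this]
  apply StronglyMeasurable.add
  · unfold arrM
    apply Finset.stronglyMeasurable_fun_sum
    intro i hi
    rw [Finset.mem_Icc] at hi
    exact (hadp n i hi.1 hi.2).mono (ℱ.mono (hi.2.trans h))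
  · apply Finset.stronglyMeasurable_fun_sum
    intro j hj
    rw [Finset.mem_Ioc] at hj
    exact (hadp j j (hn.trans hj.1.le) le_rfl).mono (ℱ.mono hj.2)

omit [IsProbabilityMeasure μ] in
lemma arrS_integrable
    (hint : ∀ n i, 1 ≤ i → i ≤ n → Integrable (D n i) μ)
    {n k : ℕ} (hn : 1 ≤ n) (h : n ≤ k) :
    Integrable (arrS D n k) μ := by
  have : arrS D n k = fun ω => arrM D n n ω + ∑ j ∈ Finset.Ioc n k, D j j ω :=
    funext (arrS_eq h)
  rw [this]
  apply Integrable.add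
  · unfold arrM
    apply integrable_finset_sum
    intro i hi
    rw [Finset.mem_Icc] at hi
    exact hint n i hi.1 hi.2
  · apply integrable_finset_sum
    intro j hj
    rw [Finset.mem_Ioc] at hj
    exact hint j j (hn.trans hj.1.le) le_rfl

lemma condexp_arrS_sub
    (hint : ∀ n i, 1 ≤ i → i ≤ n → Integrable (D n i) μ)
    (hmd : ∀ n i, 1 ≤ i → i ≤ n → μ[D n i | ℱ (i - 1)] =ᵐ[μ] 0)
    {n m k : ℕ} (hn : 1 ≤ n) (hm : n ≤ m) (hk : m ≤ k) :
    μ[fun ω => arrS D n k ω - arrS D n m ω | ℱ m] =ᵐ[μ] 0 := by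
  have hdiff : (fun ω => arrS D n k ω - arrS D n m ω)
      = ∑ j ∈ Finset.Ioc m k, (fun ω => D j j ω) := by
    funext ω
    rw [arrS_eq (hm.trans hk), arrS_eq hm, Finset.sum_apply]
    have := Finset.sum_Ioc_consecutive (fun j => D j j ω) hm hk
    simp only [← this]
    ring
  rw [hdiff]
  have hterm : ∀ j ∈ Finset.Ioc m k, μ[fun ω => D j j ω | ℱ m] =ᵐ[μ] 0 := by
    intro j hj
    rw [Finset.mem_Ioc] at hj
    have hj1 : 1 ≤ j := hn.trans (hm.trans hj.1.le)
    have h1 : μ[fun ω => D j j ω | ℱ m]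
        =ᵐ[μ] μ[μ[fun ω => D j j ω | ℱ (j - 1)] | ℱ m] :=
      (condExp_condExp_of_le (ℱ.mono (by omega : m ≤ j - 1)) (ℱ.le (j - 1))).symm
    refine h1.trans ?_
    refine (condExp_congr_ae (m := ℱ m) (hmd j j hj1 le_rfl)).trans ?_
    rw [condExp_zero]
  have hsum := condExp_finset_sum (m := ℱ m) (μ := μ)
    (fun j hj => by
      rw [Finset.mem_Ioc] at hj
      exact hint j j (hn.trans (hm.trans hj.1.le)) le_rfl)
    (s := Finset.Ioc m k)
  refine hsum.trans ?_
  have hall : ∀ᵐ ω ∂μ, ∀ j ∈ Finset.Ioc m k, (μ[fun ω => D j j ω | ℱ m]) ω = 0 := by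
    rw [Filter.eventually_all_finset]
    intro j hj
    filter_upwards [hterm j hj] with ω hω using hω
  filter_upwards [hall] with ω hω
  rw [Finset.sum_apply]
  exact Finset.sum_eq_zero hω

lemma setIntegral_arrS_le
    (hadp : ∀ n i, 1 ≤ i → i ≤ n → StronglyMeasurable[ℱ i] (D n i))
    (hint : ∀ n i, 1 ≤ i → i ≤ n → Integrable (D n i) μ)
    (hmd : ∀ n i, 1 ≤ i → i ≤ n → μ[D n i | ℱ (i - 1)] =ᵐ[μ] 0)
    {p : ℝ} (hp : 1 ≤ p) {n : ℕ}
    (hintS : ∀ k, Integrable (fun ω => |arrS D n k ω| ^ p) μ)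
    {m k : ℕ} (hn : 1 ≤ n) (hm : n ≤ m) (hk : m ≤ k)
    {s : Set Ω} (hs : MeasurableSet[ℱ m] s) :
    ∫ ω in s, |arrS D n m ω| ^ p ∂μ ≤ ∫ ω in s, |arrS D n k ω| ^ p ∂μ := by
  set f := arrS D n m with hf
  set g := arrS D n k with hg
  have hfm : StronglyMeasurable[ℱ m] f := arrS_stronglyMeasurable hadp hn hm
  set X : Ω → ℝ := fun ω => g ω - f ω with hX
  set h : Ω → ℝ := s.indicator (fun ω => p * |f ω| ^ (p - 1) * Real.sign (f ω)) with hhdef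
  have hh_sm : StronglyMeasurable[ℱ m] h := by
    have h1 : StronglyMeasurable[ℱ m] fun ω => |f ω| :=
      continuous_abs.comp_stronglyMeasurable hfm
    have h2 : StronglyMeasurable[ℱ m] fun ω => |f ω| ^ (p - 1) :=
      (Real.continuous_rpow_const (by linarith : (0:ℝ) ≤ p - 1)).comp_stronglyMeasurable h1
    have h3 : StronglyMeasurable[ℱ m] fun ω => Real.sign (f ω) :=
      (measurable_realSign.comp hfm.measurable).stronglyMeasurable
    exact ((h2.const_mul p).mul h3).indicator hs
  have hX_int : Integrable X μ :=
    (arrS_integrable hint hn (hm.trans hk)).sub (arrS_integrable hint hn hm)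
  have hbound : ∀ ω, |h ω * X ω| ≤ p * (3 * |f ω| ^ p + |g ω| ^ p) := by
    intro ω
    have h1 : |h ω| ≤ p * |f ω| ^ (p - 1) := by
      rw [hhdef]
      by_cases hω : ω ∈ s
      · rw [Set.indicator_of_mem hω, abs_mul, abs_mul, abs_of_nonneg (by linarith : (0:ℝ) ≤ p),
          abs_of_nonneg (Real.rpow_nonneg (abs_nonneg _) _)]
        calc p * |f ω| ^ (p - 1) * |Real.sign (f ω)|
            ≤ p * |f ω| ^ (p - 1) * 1 :=
              mul_le_mul_of_nonneg_left (abs_realSign_le _) (by positivity)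
          _ = p * |f ω| ^ (p - 1) := mul_one _
      · rw [Set.indicator_of_notMem hω, abs_zero]; positivity
    have h2 : |X ω| ≤ |g ω| + |f ω| := abs_sub _ _
    have h3 : |f ω| ^ (p - 1) * |g ω| ≤ |f ω| ^ p + |g ω| ^ p :=
      rpow_sub_one_mul_le hp (abs_nonneg _) (abs_nonneg _)
    have h4 : |f ω| ^ (p - 1) * |f ω| ≤ |f ω| ^ p + |f ω| ^ p :=
      rpow_sub_one_mul_le hp (abs_nonneg _) (abs_nonneg _)
    have h5 : |h ω * X ω| = |h ω| * |X ω| := abs_mul _ _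
    have h6 : |h ω| * |X ω| ≤ (p * |f ω| ^ (p - 1)) * (|g ω| + |f ω|) :=
      mul_le_mul h1 h2 (abs_nonneg _) (by positivity)
    have hp0 : (0:ℝ) ≤ p := by linarith
    nlinarith [abs_nonneg (f ω), abs_nonneg (g ω), Real.rpow_nonneg (abs_nonneg (f ω)) (p-1)]
  have hhX_int : Integrable (h * X) μ := by
    refine Integrable.mono' ((((hintS m).const_mul 3).add (hintS k)).const_mul p)
      (((hh_sm.mono (ℱ.le m)).aestronglyMeasurable).mul hX_int.aestronglyMeasurable)
      (Filter.Eventually.of_forall fun ω => ?_)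
    simp only [Pi.mul_apply, Real.norm_eq_abs]
    exact hbound ω
  have hX0 : μ[X | ℱ m] =ᵐ[μ] 0 := condexp_arrS_sub hint hmd hn hm hk
  have hcond : μ[h * X | ℱ m] =ᵐ[μ] h * μ[X | ℱ m] :=
    condExp_mul_of_stronglyMeasurable_left hh_sm hhX_int hX_int
  have hzero : ∫ ω, (h * X) ω ∂μ = 0 := by
    rw [← integral_condExp (ℱ.le m) (f := h * X)]
    rw [integral_congr_ae hcond]
    have : h * μ[X | ℱ m] =ᵐ[μ] 0 := by
      filter_upwards [hX0] with ω hω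
      simp [hω]
    rw [integral_congr_ae this]
    simp
  have hpt : ∀ ω, s.indicator (fun ω => |f ω| ^ p) ω + (h * X) ω
      ≤ s.indicator (fun ω => |g ω| ^ p) ω := by
    intro ω
    by_cases hω : ω ∈ s
    · simp only [Set.indicator_of_mem hω, hhdef, Pi.mul_apply, Set.indicator_of_mem hω, hX]
      exact tangent_rpow hp (f ω) (g ω)
    · simp [Set.indicator_of_notMem hω, hhdef]
  have hind_f : Integrable (s.indicator fun ω => |f ω| ^ p) μ :=
    (hintS m).indicator (ℱ.le m s hs)
  have hind_g : Integrable (s.indicator fun ω => |g ω| ^ p) μ :=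
    (hintS k).indicator (ℱ.le m s hs)
  calc ∫ ω in s, |f ω| ^ p ∂μ
      = ∫ ω, s.indicator (fun ω => |f ω| ^ p) ω ∂μ := (integral_indicator (ℱ.le m s hs)).symm
    _ = ∫ ω, (s.indicator (fun ω => |f ω| ^ p) ω + (h * X) ω) ∂μ := by
        rw [integral_add hind_f hhX_int, hzero, add_zero]
    _ ≤ ∫ ω, s.indicator (fun ω => |g ω| ^ p) ω ∂μ :=
        integral_mono (hind_f.add hhX_int) hind_g hpt
    _ = ∫ ω in s, |g ω| ^ p ∂μ := integral_indicator (ℱ.le m s hs)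

end measLemmas

/-- Triangular array generalization of the Chow–Birnbaum–Marshall inequality. -/
theorem cbm_martingale_array
    {Ω : Type*} {m0 : MeasurableSpace Ω} {μ : Measure Ω} [IsProbabilityMeasure μ]
    {ℱ : Filtration ℕ m0} {D : ℕ → ℕ → Ω → ℝ}
    (hadp : ∀ n i, 1 ≤ i → i ≤ n → StronglyMeasurable[ℱ i] (D n i))
    (hint : ∀ n i, 1 ≤ i → i ≤ n → Integrable (D n i) μ)
    (hmd : ∀ n i, 1 ≤ i → i ≤ n → μ[D n i | ℱ (i - 1)] =ᵐ[μ] 0)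
    {c : ℕ → ℝ} (hc_pos : ∀ k, 0 < c k) (hc_mono : ∀ k l, k ≤ l → c l ≤ c k)
    {p : ℝ} (hp : 1 ≤ p) {lam : ℝ} (hlam : 0 < lam)
    {n N : ℕ} (hn : 1 ≤ n) (hnN : n ≤ N)
    (hintS : ∀ k, Integrable (fun ω => |arrS D n k ω| ^ p) μ)
    (hintR : Integrable
      (fun ω => (∑ j ∈ Finset.Icc (n + 1) N, c j * |arrR D j ω|) ^ p) μ) :
    2⁻¹ ^ p * lam ^ p *
        (μ {ω | ∃ m, n ≤ m ∧ m ≤ N ∧ lam < c m * |arrM D m m ω|}).toReal ≤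
      c N ^ p * ∫ ω, |arrS D n N ω| ^ p ∂μ +
        ∑ j ∈ Finset.Ico n N, (c j ^ p - c (j + 1) ^ p) * ∫ ω, |arrS D n j ω| ^ p ∂μ +
        ∫ ω, (∑ j ∈ Finset.Icc (n + 1) N, c j * |arrR D j ω|) ^ p ∂μ := by
  classical
  set T : Ω → ℝ := fun ω => ∑ j ∈ Finset.Icc (n + 1) N, c j * |arrR D j ω| with hTdef
  have hT_nonneg : ∀ ω, 0 ≤ T ω := fun ω =>
    Finset.sum_nonneg fun j _ => mul_nonneg (hc_pos j).le (abs_nonneg _)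
  have hR_meas : ∀ j, 2 ≤ j → Measurable (arrR D j) := by
    intro j hj
    unfold arrR
    apply Finset.measurable_sum
    intro i hi
    rw [Finset.mem_Icc] at hi
    exact (((hadp j i hi.1 (by omega)).mono (ℱ.le i)).measurable).sub
      (((hadp (j - 1) i hi.1 hi.2).mono (ℱ.le i)).measurable)
  have hT_meas : Measurable T := by
    apply Finset.measurable_sum
    intro j hj
    rw [Finset.mem_Icc] at hj
    exact ((hR_meas j (by omega)).abs).const_mul (c j)
  -- events
  set E : ℕ → Set Ω := fun m => {ω | lam / 2 < c m * |arrS D n m ω|} with hEdef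
  set A : ℕ → Set Ω := fun m => E m ∩ ⋂ i ∈ Finset.Ico n m, (E i)ᶜ with hAdef
  set B : Set Ω := {ω | lam / 2 < T ω} with hBdef
  have hEmeas : ∀ m, n ≤ m → MeasurableSet[ℱ m] (E m) := by
    intro m hm
    have hg : Measurable[ℱ m] fun ω => c m * |arrS D n m ω| :=
      ((continuous_abs.comp_stronglyMeasurable
        (arrS_stronglyMeasurable hadp hn hm)).measurable).const_mul (c m)
    exact measurableSet_lt measurable_const hg
  have hAmeas : ∀ m, n ≤ m → MeasurableSet[ℱ m] (A m) := by
    intro m hm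
    refine (hEmeas m hm).inter (MeasurableSet.iInter fun i => MeasurableSet.iInter fun hi => ?_)
    rw [Finset.mem_Ico] at hi
    exact ℱ.mono hi.2.le _ (hEmeas i hi.1).compl
  have hA_disj : ∀ i j, n ≤ i → n ≤ j → i ≠ j → Disjoint (A i) (A j) := by
    have key : ∀ i j, n ≤ i → i < j → Disjoint (A i) (A j) := by
      intro i j hi hij
      rw [Set.disjoint_left]
      intro ω h1 h2
      exact (Set.mem_iInter₂.1 h2.2 i (Finset.mem_Ico.2 ⟨hi, hij⟩)) h1.1
    intro i j hi hj hij
    rcases lt_or_gt_of_ne hij with h | h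
    · exact key i j hi h
    · exact (key j i hj h).symm
  -- inclusion
  have hGsub : {ω | ∃ m, n ≤ m ∧ m ≤ N ∧ lam < c m * |arrM D m m ω|}
      ⊆ (⋃ m ∈ Finset.Icc n N, A m) ∪ B := by
    intro ω hω
    obtain ⟨m, hm1, hm2, hm3⟩ := hω
    have hid := arrM_eq_arrS_add (D := D) hn hm1 ω
    have h2 : |arrM D m m ω| ≤ |arrS D n m ω| + ∑ j ∈ Finset.Ioc n m, |arrR D j ω| := by
      rw [hid]
      exact (abs_add_le _ _).trans (add_le_add_right (Finset.abs_sum_le_sum_abs _ _) _)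
    have h3 : c m * ∑ j ∈ Finset.Ioc n m, |arrR D j ω| ≤ T ω := by
      rw [Finset.mul_sum]
      calc ∑ j ∈ Finset.Ioc n m, c m * |arrR D j ω|
          ≤ ∑ j ∈ Finset.Ioc n m, c j * |arrR D j ω| :=
            Finset.sum_le_sum fun j hj =>
              mul_le_mul_of_nonneg_right (hc_mono j m (Finset.mem_Ioc.1 hj).2) (abs_nonneg _)
        _ ≤ T ω := by
            rw [hTdef]
            refine Finset.sum_le_sum_of_subset_of_nonneg ?_
              (fun j _ _ => mul_nonneg (hc_pos j).le (abs_nonneg _))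
            rw [← Finset.Icc_add_one_left_eq_Ioc]
            exact Finset.Icc_subset_Icc le_rfl hm2
    have h4 : lam < c m * |arrS D n m ω| + T ω := by
      have := mul_le_mul_of_nonneg_left h2 (hc_pos m).le
      rw [mul_add] at this
      linarith
    rcases lt_or_ge (lam / 2) (c m * |arrS D n m ω|) with hc1 | hc1
    · left
      have hP : ∃ k, n ≤ k ∧ k ≤ N ∧ lam / 2 < c k * |arrS D n k ω| := ⟨m, hm1, hm2, hc1⟩
      set m₀ := Nat.find hP with hm₀
      obtain ⟨hk1, hk2, hk3⟩ := Nat.find_spec hP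
      refine Set.mem_biUnion (Finset.mem_Icc.2 ⟨hk1, hk2⟩) ?_
      refine ⟨hk3, Set.mem_iInter₂.2 fun i hi => ?_⟩
      rw [Finset.mem_Ico] at hi
      have hmin := Nat.find_min hP hi.2
      intro hEi
      exact hmin ⟨hi.1, le_trans (le_of_lt hi.2) hk2, hEi⟩
    · right
      rw [hBdef]
      simp only [Set.mem_setOf_eq]
      linarith
  -- measure bound
  have hμG : (μ {ω | ∃ m, n ≤ m ∧ m ≤ N ∧ lam < c m * |arrM D m m ω|}).toReal
      ≤ ∑ m ∈ Finset.Icc n N, (μ (A m)).toReal + (μ B).toReal := by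
    have h1 : μ {ω | ∃ m, n ≤ m ∧ m ≤ N ∧ lam < c m * |arrM D m m ω|}
        ≤ ∑ m ∈ Finset.Icc n N, μ (A m) + μ B :=
      (measure_mono hGsub).trans ((measure_union_le _ _).trans
        (add_le_add_left (measure_biUnion_finset_le _ _) _))
    have h2 : (∑ m ∈ Finset.Icc n N, μ (A m)) + μ B ≠ ⊤ := by
      refine ENNReal.add_ne_top.2 ⟨?_, measure_ne_top μ B⟩
      exact (ENNReal.sum_lt_top.2 fun m _ => measure_lt_top μ (A m)).ne
    calc (μ {ω | ∃ m, n ≤ m ∧ m ≤ N ∧ lam < c m * |arrM D m m ω|}).toReal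
        ≤ ((∑ m ∈ Finset.Icc n N, μ (A m)) + μ B).toReal := ENNReal.toReal_mono h2 h1
      _ = ∑ m ∈ Finset.Icc n N, (μ (A m)).toReal + (μ B).toReal := by
          rw [ENNReal.toReal_add (ENNReal.sum_lt_top.2 fun m _ =>
            measure_lt_top μ (A m)).ne (measure_ne_top μ B),
            ENNReal.toReal_sum fun m _ => measure_ne_top μ (A m)]
  have hlam2 : 2⁻¹ ^ p * lam ^ p = (lam / 2) ^ p := by
    rw [← Real.mul_rpow (by norm_num) hlam.le]
    congr 1
    ring
  have hp0 : (0:ℝ) ≤ p := by linarith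
  have hl2 : (0:ℝ) < lam / 2 := by linarith
  have hBmeas : MeasurableSet B := measurableSet_lt measurable_const hT_meas
  have hMarkov : (lam / 2) ^ p * (μ B).toReal ≤ ∫ ω, T ω ^ p ∂μ := by
    have s1 : (lam / 2) ^ p * (μ B).toReal ≤ ∫ ω in B, T ω ^ p ∂μ :=
      by
        have := setIntegral_ge_of_const_le hBmeas (measure_ne_top μ B)
          (fun ω hω => Real.rpow_le_rpow hl2.le (le_of_lt hω) hp0) hintR.integrableOn
        rw [smul_eq_mul, mul_comm] at this
        exact this
    exact s1.trans (setIntegral_le_integral hintR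
      (Filter.Eventually.of_forall fun ω => Real.rpow_nonneg (hT_nonneg ω) p))
  have hstep1 : ∀ m, n ≤ m → m ≤ N → (lam / 2) ^ p * (μ (A m)).toReal
      ≤ c m ^ p * ∫ ω in A m, |arrS D n m ω| ^ p ∂μ := by
    intro m hm1 hm2
    have hmeasA : MeasurableSet (A m) := ℱ.le m _ (hAmeas m hm1)
    have hconst : ∀ ω ∈ A m, (lam / 2) ^ p ≤ c m ^ p * |arrS D n m ω| ^ p := by
      intro ω hω
      have hE : lam / 2 < c m * |arrS D n m ω| := hω.1
      calc (lam / 2) ^ p ≤ (c m * |arrS D n m ω|) ^ p :=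
            Real.rpow_le_rpow hl2.le hE.le hp0
        _ = c m ^ p * |arrS D n m ω| ^ p := Real.mul_rpow (hc_pos m).le (abs_nonneg _)
    have h1 := setIntegral_ge_of_const_le hmeasA (measure_ne_top μ _) hconst
      (((hintS m).const_mul (c m ^ p)).integrableOn)
    rw [smul_eq_mul, mul_comm (μ.real _)] at h1
    rwa [MeasureTheory.integral_const_mul] at h1
  have hkeyle : ∀ m j, n ≤ m → m ≤ j →
      ∫ ω in A m, |arrS D n m ω| ^ p ∂μ ≤ ∫ ω in A m, |arrS D n j ω| ^ p ∂μ :=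
    fun m j hm hj => setIntegral_arrS_le hadp hint hmd hp hintS hn hm hj (hAmeas m hm)
  have hcoef : ∀ j : ℕ, 0 ≤ c j ^ p - c (j + 1) ^ p := fun j =>
    sub_nonneg.2 (Real.rpow_le_rpow (hc_pos _).le (hc_mono j (j + 1) (Nat.le_succ j)) hp0)
  have hstep2 : ∀ m, n ≤ m → m ≤ N → c m ^ p * ∫ ω in A m, |arrS D n m ω| ^ p ∂μ
      ≤ c N ^ p * ∫ ω in A m, |arrS D n N ω| ^ p ∂μ
        + ∑ j ∈ Finset.Ico m N, (c j ^ p - c (j + 1) ^ p) * ∫ ω in A m, |arrS D n j ω| ^ p ∂μ := by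
    intro m hm1 hm2
    have htel0 := sum_Ico_tele (fun j => c j ^ p) hm2
    have htel : c m ^ p = c N ^ p + ∑ j ∈ Finset.Ico m N, (c j ^ p - c (j + 1) ^ p) := by
      linarith
    rw [htel, add_mul, Finset.sum_mul]
    refine add_le_add (mul_le_mul_of_nonneg_left (hkeyle m N hm1 hm2)
      (Real.rpow_nonneg (hc_pos N).le p)) (Finset.sum_le_sum fun j hj => ?_)
    rw [Finset.mem_Ico] at hj
    exact mul_le_mul_of_nonneg_left (hkeyle m j hm1 hj.1) (hcoef j)
  have hdisj_sum : ∀ (j : ℕ) (t : Finset ℕ), (∀ m ∈ t, n ≤ m) →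
      ∑ m ∈ t, ∫ ω in A m, |arrS D n j ω| ^ p ∂μ ≤ ∫ ω, |arrS D n j ω| ^ p ∂μ := by
    intro j t ht
    rw [← integral_biUnion_finset t (fun m hm => ℱ.le m _ (hAmeas m (ht m hm)))
      (fun i hi j' hj' hne => hA_disj i j' (ht i hi) (ht j' hj') hne)
      (fun m _ => (hintS j).integrableOn)]
    exact setIntegral_le_integral (hintS j)
      (Filter.Eventually.of_forall fun ω => Real.rpow_nonneg (abs_nonneg _) _)
  calc 2⁻¹ ^ p * lam ^ p *
        (μ {ω | ∃ m, n ≤ m ∧ m ≤ N ∧ lam < c m * |arrM D m m ω|}).toReal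
      = (lam / 2) ^ p *
        (μ {ω | ∃ m, n ≤ m ∧ m ≤ N ∧ lam < c m * |arrM D m m ω|}).toReal := by rw [hlam2]
    _ ≤ (lam / 2) ^ p * (∑ m ∈ Finset.Icc n N, (μ (A m)).toReal + (μ B).toReal) :=
        mul_le_mul_of_nonneg_left hμG (Real.rpow_nonneg hl2.le p)
    _ = ∑ m ∈ Finset.Icc n N, (lam / 2) ^ p * (μ (A m)).toReal
        + (lam / 2) ^ p * (μ B).toReal := by rw [mul_add, Finset.mul_sum]
    _ ≤ ∑ m ∈ Finset.Icc n N, (c N ^ p * ∫ ω in A m, |arrS D n N ω| ^ p ∂μ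
          + ∑ j ∈ Finset.Ico m N, (c j ^ p - c (j + 1) ^ p)
            * ∫ ω in A m, |arrS D n j ω| ^ p ∂μ)
        + ∫ ω, T ω ^ p ∂μ := by
        refine add_le_add (Finset.sum_le_sum fun m hm => ?_) hMarkov
        rw [Finset.mem_Icc] at hm
        exact (hstep1 m hm.1 hm.2).trans (hstep2 m hm.1 hm.2)
    _ = c N ^ p * ∑ m ∈ Finset.Icc n N, ∫ ω in A m, |arrS D n N ω| ^ p ∂μ
        + ∑ j ∈ Finset.Ico n N, (c j ^ p - c (j + 1) ^ p)
            * ∑ m ∈ Finset.Icc n j, ∫ ω in A m, |arrS D n j ω| ^ p ∂μ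
        + ∫ ω, T ω ^ p ∂μ := by
        rw [Finset.sum_add_distrib, ← Finset.mul_sum]
        congr 1
        congr 1
        rw [Finset.sum_comm' (s := Finset.Icc n N) (t := fun m => Finset.Ico m N)
          (s' := fun j => Finset.Icc n j) (t' := Finset.Ico n N)
          (by intro m j; simp only [Finset.mem_Icc, Finset.mem_Ico]; omega)]
        exact Finset.sum_congr rfl fun j _ => (Finset.mul_sum _ _ _).symm
    _ ≤ c N ^ p * ∫ ω, |arrS D n N ω| ^ p ∂μ
        + ∑ j ∈ Finset.Ico n N, (c j ^ p - c (j + 1) ^ p) * ∫ ω, |arrS D n j ω| ^ p ∂μ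
        + ∫ ω, (∑ j ∈ Finset.Icc (n + 1) N, c j * |arrR D j ω|) ^ p ∂μ := by
        refine add_le_add (add_le_add
          (mul_le_mul_of_nonneg_left
            (hdisj_sum N (Finset.Icc n N) fun m hm => (Finset.mem_Icc.1 hm).1)
            (Real.rpow_nonneg (hc_pos N).le p))
          (Finset.sum_le_sum fun j _ => mul_le_mul_of_nonneg_left
            (hdisj_sum j (Finset.Icc n j) fun m hm => (Finset.mem_Icc.1 hm).1)
            (hcoef j))) le_rfl
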